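/- Let g ≥ 2, let Γ_L be a group generated by two elements whose abelianization is a free abelian group of rank 2, and let Γ' be a finitely generated group whose abelianization is a free abelian group of rank g − 2. Then there exists k ∈ {0, 1, 2, 3, 4} such that ks_{A4}(Γ_L * Γ') = (48 + 24k)·ks_{A4}(Γ') − (26 + 16k)·3^{g−2} − (8 + 6k)·4^{g−2}; in particular, 48 + 24k divides ks_{A4}(Γ_L * Γ') + (26 + 16k)·3^{g−2} + (8 + 6k)·4^{g−2}. -/

import Mathlib

/-- The conjugation equivalence on homomorphisms `Γ →* G`. -/
def homConj (Γ G : Type*) [Group Γ] [Group G] : Setoid (Γ →* G) where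
  r φ ψ := ∃ g : G, ∀ x, ψ x = g * φ x * g⁻¹
  iseqv := by
    refine ⟨fun φ => ⟨1, by simp⟩, ?_, ?_⟩
    · rintro φ ψ ⟨g, hg⟩
      exact ⟨g⁻¹, fun x => by rw [hg x]; group⟩
    · rintro φ ψ χ ⟨g, hg⟩ ⟨h, hh⟩
      exact ⟨h * g, fun x => by rw [hh x, hg x]; group⟩

/-- `ks G Γ`: number of conjugacy classes of homomorphisms `Γ →* G`. -/
noncomputable def ks (G Γ : Type*) [Group G] [Group Γ] : ℕ :=
  Nat.card (Quotient (homConj Γ G))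

/-- `ksw G Γ`: number of homomorphisms `Γ →* G`. -/
noncomputable def ksw (G Γ : Type*) [Group G] [Group Γ] : ℕ :=
  Nat.card (Γ →* G)

/-- `ksSub G H Γ`: the number of conjugacy classes of homomorphisms `Γ →* G` whose
image is contained in some subgroup of `G` isomorphic to `H`. -/
noncomputable def ksSub (G : Type*) [Group G] (H : Type*) [Group H] (Γ : Type*) [Group Γ] : ℕ :=
  Nat.card (Quotient (Setoid.comap
    (Subtype.val : {φ : Γ →* G // ∃ K : Subgroup G, Nonempty (K ≃* H) ∧ φ.range ≤ K} → (Γ →* G))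
    (homConj Γ G)))

/-- Number of conjugacy classes of homomorphisms `Γ →* G` satisfying a property `P`. -/
noncomputable def ksRestrict (G Γ : Type*) [Group G] [Group Γ] (P : (Γ →* G) → Prop) : ℕ :=
  Nat.card (Quotient (Setoid.comap
    (Subtype.val : {φ : Γ →* G // P φ} → (Γ →* G)) (homConj Γ G)))

/-- A maximal abelian subgroup. -/
def IsMaximalAbelian {G : Type*} [Group G] (K : Subgroup G) : Prop :=
  IsMulCommutative K ∧ ∀ K' : Subgroup G, IsMulCommutative K' → K ≤ K' → K' = K

abbrev A4 : Type := alternatingGroup (Fin 4)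
abbrev A5 : Type := alternatingGroup (Fin 5)
abbrev V4 : Type := Multiplicative (ZMod 2 × ZMod 2)
abbrev Z3 : Type := Multiplicative (ZMod 3)
abbrev Z5 : Type := Multiplicative (ZMod 5)
/-- The free abelian group of rank `g`, written multiplicatively. -/
abbrev Zg (g : ℕ) : Type := Multiplicative (Fin g → ℤ)

/-! ### Auxiliary material -/

abbrev S4 : Type := Equiv.Perm (Fin 4)

section Equivs

variable {Γ Δ A B H : Type*} [Group Γ] [Group Δ] [Group A] [Group B] [Group H]

/-- Postcomposition with an isomorphism. -/
def postcompEquiv (e : A ≃* B) : (Γ →* A) ≃ (Γ →* B) where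
  toFun φ := e.toMonoidHom.comp φ
  invFun φ := e.symm.toMonoidHom.comp φ
  left_inv φ := by ext x; simp
  right_inv φ := by ext x; simp

/-- Precomposition with an isomorphism. -/
def precompEquiv (e : Γ ≃* Δ) : (Δ →* B) ≃ (Γ →* B) where
  toFun φ := φ.comp e.toMonoidHom
  invFun φ := φ.comp e.symm.toMonoidHom
  left_inv φ := by ext x; simp
  right_inv φ := by ext x; simp

lemma finite_hom (S : Set Γ) (hfin : S.Finite) (hS : Subgroup.closure S = ⊤) [Finite B] :
    Finite (Γ →* B) := by
  haveI := hfin.to_subtype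
  apply Finite.of_injective (fun φ : Γ →* B => fun s : S => φ s)
  intro φ ψ h
  exact MonoidHom.eq_of_eqOn_dense hS (fun x hx => congrFun h ⟨x, hx⟩)

/-- Counting homomorphisms from a group with free abelianization into an abelian group. -/
lemma card_hom_abelian (n : ℕ) (hab : Nonempty (Abelianization Γ ≃* Zg n))
    (H : Type*) [CommGroup H] : Nat.card (Γ →* H) = (Nat.card H) ^ n := by
  obtain ⟨e⟩ := hab
  have E : (Γ →* H) ≃ (Fin n → Additive H) :=
    (Abelianization.lift.trans (precompEquiv e.symm)).trans <|
      (MonoidHom.toAdditiveRight.trans (addMonoidHomLequivInt (B := Additive H) ℤ).toEquiv).trans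
        ((Pi.basisFun ℤ (Fin n)).constr ℤ).symm.toEquiv
  rw [Nat.card_congr E, Nat.card_pi, Finset.prod_const, Finset.card_univ, Fintype.card_fin]
  rfl

end Equivs

section ConjAction

variable (Γ G : Type*) [Group Γ] [Group G]

instance homConjSMul : SMul G (Γ →* G) :=
  ⟨fun g φ =>
    { toFun := fun x => g * φ x * g⁻¹
      map_one' := by simp
      map_mul' := fun a b => by simp [mul_assoc] }⟩

variable {Γ G}

lemma smul_hom_apply (g : G) (φ : Γ →* G) (x : Γ) : (g • φ) x = g * φ x * g⁻¹ := rfl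

variable (Γ G) in
instance homConjAct : MulAction G (Γ →* G) :=
  { homConjSMul Γ G with
    one_smul := fun φ => by ext x; rw [smul_hom_apply]; simp
    mul_smul := fun g h φ => by
      ext x
      rw [smul_hom_apply, smul_hom_apply, smul_hom_apply]
      group }

variable (Γ G) in
lemma homConj_eq_orbitRel : homConj Γ G = MulAction.orbitRel G (Γ →* G) := by
  apply Setoid.ext
  intro φ ψ
  rw [MulAction.orbitRel_apply, MulAction.mem_orbit_iff]
  constructor
  · rintro ⟨g, hg⟩
    refine ⟨g⁻¹, ?_⟩
    ext x
    rw [smul_hom_apply, hg x]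
    group
  · rintro ⟨g, rfl⟩
    exact ⟨g⁻¹, fun x => by rw [smul_hom_apply]; group⟩

/-- The fixed points of conjugation by `g` are the homomorphisms into the centralizer. -/
def fixedEquiv (g : G) :
    (MulAction.fixedBy (Γ →* G) g) ≃ (Γ →* Subgroup.centralizer ({g} : Set G)) where
  toFun φ := MonoidHom.codRestrict φ.1 _ (fun x => Subgroup.mem_centralizer_iff.2 (by
    rintro h rfl
    have h1 := congrArg (fun (ψ : Γ →* G) => ψ x) φ.2
    simp only [smul_hom_apply] at h1
    exact (mul_inv_eq_iff_eq_mul.mp h1)))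
  invFun ψ := ⟨(Subgroup.centralizer ({g} : Set G)).subtype.comp ψ, by
    ext x
    have h1 := (ψ x).2
    rw [Subgroup.mem_centralizer_iff] at h1
    have hgx := h1 g rfl
    simp only [smul_hom_apply, MonoidHom.coe_comp, Function.comp_apply, Subgroup.coe_subtype]
    rw [hgx, mul_inv_cancel_right]⟩
  left_inv φ := by ext x; rfl
  right_inv ψ := by ext x; rfl

end ConjAction

/-! ### Decidable facts about `A4` -/

private lemma dec_comm_centralizer : ∀ g a b : A4, g ≠ 1 →
    g * a = a * g → g * b = b * g → a * b = b * a := by decide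

private lemma dec_card4 : ∀ g : A4, g ≠ 1 → g * g = 1 →
    ((Finset.univ : Finset A4).filter (fun x => g * x = x * g)).card = 4 := by decide

private lemma dec_card3 : ∀ g : A4, g ≠ 1 → ¬(g * g = 1) →
    ((Finset.univ : Finset A4).filter (fun x => g * x = x * g)).card = 3 := by decide

private lemma dec_filter1 : ((Finset.univ : Finset A4).filter (fun g => g = 1)).card = 1 := by
  decide

private lemma dec_filter3 :
    ((Finset.univ : Finset A4).filter (fun g => ¬g = 1 ∧ g * g = 1)).card = 3 := by decide

private lemma dec_filter8 :
    ((Finset.univ : Finset A4).filter (fun g => ¬g = 1 ∧ ¬(g * g = 1))).card = 8 := by decide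

private lemma dec_commpairs :
    ((Finset.univ : Finset (A4 × A4)).filter (fun p => p.1 * p.2 = p.2 * p.1)).card = 48 := by
  decide

private lemma dec_rigid : ∀ (a b : A4) (σ : S4), ¬(a * b = b * a) →
    σ * ↑a = ↑a * σ → σ * ↑b = ↑b * σ → σ = 1 := by decide

private lemma dec_cardA4 : Fintype.card A4 = 12 := by decide

lemma card_centralizer_eq_filter (g : A4) :
    Nat.card (Subgroup.centralizer ({g} : Set A4)) =
      ((Finset.univ : Finset A4).filter (fun x => g * x = x * g)).card := by
  have e : ↥(Subgroup.centralizer ({g} : Set A4)) ≃ {x : A4 // g * x = x * g} :=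
    Equiv.subtypeEquivRight (fun x => by simp [Subgroup.mem_centralizer_iff])
  rw [Nat.card_congr e, Nat.card_eq_fintype_card, Fintype.card_subtype]

lemma centralizer_isCommutative (g : A4) (hg : g ≠ 1) :
    IsMulCommutative (Subgroup.centralizer ({g} : Set A4)) := by
  constructor
  constructor
  rintro ⟨a, ha⟩ ⟨b, hb⟩
  rw [Subgroup.mem_centralizer_iff] at ha hb
  exact Subtype.ext (dec_comm_centralizer g a b hg (ha g rfl) (hb g rfl))

lemma centralizer_one_eq_top : Subgroup.centralizer ({(1 : A4)} : Set A4) = ⊤ := by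
  ext x
  simp [Subgroup.mem_centralizer_iff]

/-! ### Burnside counting for `A4` -/

lemma burnside_A4 (Γ : Type*) [Group Γ] [Finite (Γ →* A4)] (c4 c3 : ℕ)
    (h4 : ∀ K : Subgroup A4, IsMulCommutative K → Nat.card K = 4 → Nat.card (Γ →* K) = c4)
    (h3 : ∀ K : Subgroup A4, IsMulCommutative K → Nat.card K = 3 → Nat.card (Γ →* K) = c3) :
    ks A4 Γ * 12 = Nat.card (Γ →* A4) + 3 * c4 + 8 * c3 := by
  classical
  haveI : Fintype (Γ →* A4) := Fintype.ofFinite _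
  haveI : ∀ a : A4, Fintype (MulAction.fixedBy (Γ →* A4) a) := fun a => Fintype.ofFinite _
  haveI : Fintype (Quotient (MulAction.orbitRel A4 (Γ →* A4))) := Fintype.ofFinite _
  have burn := MulAction.sum_card_fixedBy_eq_card_orbits_mul_card_group A4 (Γ →* A4)
  have hks : ks A4 Γ = Fintype.card (Quotient (MulAction.orbitRel A4 (Γ →* A4))) := by
    rw [ks, homConj_eq_orbitRel, Nat.card_eq_fintype_card]
  have key : ∀ g : A4, Fintype.card (MulAction.fixedBy (Γ →* A4) g) =
      if g = 1 then Nat.card (Γ →* A4) else if g * g = 1 then c4 else c3 := by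
    intro g
    have hfix : Fintype.card (MulAction.fixedBy (Γ →* A4) g) =
        Nat.card (Γ →* Subgroup.centralizer ({g} : Set A4)) := by
      rw [← Nat.card_eq_fintype_card, Nat.card_congr (fixedEquiv g)]
    by_cases h1 : g = 1
    · subst h1
      rw [if_pos rfl, hfix, centralizer_one_eq_top,
        Nat.card_congr (postcompEquiv (Subgroup.topEquiv (G := A4)))]
    · have hcomm := centralizer_isCommutative g h1
      by_cases h2 : g * g = 1
      · rw [if_neg h1, if_pos h2, hfix]
        exact h4 _ hcomm (by rw [card_centralizer_eq_filter]; exact dec_card4 g h1 h2)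
      · rw [if_neg h1, if_neg h2, hfix]
        exact h3 _ hcomm (by rw [card_centralizer_eq_filter]; exact dec_card3 g h1 h2)
  rw [Finset.sum_congr rfl (fun g _ => key g)] at burn
  rw [Finset.sum_ite, Finset.sum_ite] at burn
  simp only [Finset.sum_const, smul_eq_mul, Finset.filter_filter] at burn
  rw [dec_filter1, dec_filter3, dec_filter8, dec_cardA4] at burn
  rw [hks]
  omega

/-! ### Homomorphisms with commutative image -/

/-- Homomorphisms with commuting values correspond to homomorphisms from the abelianization. -/
def commRangeEquiv (Γ G : Type*) [Group Γ] [Group G] :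
    {φ : Γ →* G // ∀ x y, Commute (φ x) (φ y)} ≃ (Abelianization Γ →* G) where
  toFun φ := QuotientGroup.lift (commutator Γ) φ.1 (by
    have hle : commutator Γ ≤ φ.1.ker := by
      rw [commutator_eq_closure, Subgroup.closure_le]
      rintro x ⟨p, q, rfl⟩
      simp only [SetLike.mem_coe, MonoidHom.mem_ker, map_commutatorElement,
        commutatorElement_eq_one_iff_commute]
      exact φ.2 p q
    exact fun x h => MonoidHom.mem_ker.2 (hle h))
  invFun F := ⟨F.comp Abelianization.of, fun x y => by
    show F (Abelianization.of x) * F (Abelianization.of y)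
        = F (Abelianization.of y) * F (Abelianization.of x)
    rw [← F.map_mul, ← F.map_mul, mul_comm]⟩
  left_inv φ := Subtype.ext (MonoidHom.ext fun x => rfl)
  right_inv F := MonoidHom.ext fun x => QuotientGroup.induction_on x fun z => rfl

/-- Homomorphisms `ℤ² →* G` correspond to commuting pairs. -/
def zg2Equiv (G : Type*) [Group G] : (Zg 2 →* G) ≃ {p : G × G // p.1 * p.2 = p.2 * p.1} where
  toFun φ := ⟨(φ (Multiplicative.ofAdd (Pi.single 0 1)), φ (Multiplicative.ofAdd (Pi.single 1 1))),
    by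
      have h : (Multiplicative.ofAdd (Pi.single (0 : Fin 2) (1 : ℤ) : Fin 2 → ℤ)) *
          (Multiplicative.ofAdd (Pi.single (1 : Fin 2) (1 : ℤ) : Fin 2 → ℤ)) =
          (Multiplicative.ofAdd (Pi.single (1 : Fin 2) (1 : ℤ) : Fin 2 → ℤ)) *
          (Multiplicative.ofAdd (Pi.single (0 : Fin 2) (1 : ℤ) : Fin 2 → ℤ)) := by
        rw [← ofAdd_add, ← ofAdd_add, add_comm]
      rw [← φ.map_mul, ← φ.map_mul, h]⟩
  invFun p := MonoidHom.mk' (fun z => p.1.1 ^ (Multiplicative.toAdd z 0) *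
      p.1.2 ^ (Multiplicative.toAdd z 1)) (by
    intro a b
    have h : Commute p.1.1 p.1.2 := p.2
    have h2 : Commute (p.1.2 ^ (Multiplicative.toAdd a 1)) (p.1.1 ^ (Multiplicative.toAdd b 0)) :=
      (h.symm.zpow_zpow _ _)
    show p.1.1 ^ (Multiplicative.toAdd a 0 + Multiplicative.toAdd b 0) *
        p.1.2 ^ (Multiplicative.toAdd a 1 + Multiplicative.toAdd b 1) = _
    rw [zpow_add, zpow_add, mul_assoc, ← mul_assoc (p.1.1 ^ (Multiplicative.toAdd b 0)),
      ← h2.eq, mul_assoc, ← mul_assoc, ← mul_assoc])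
  left_inv φ := by
    ext z
    show φ (Multiplicative.ofAdd (Pi.single 0 1)) ^ (Multiplicative.toAdd z 0) *
        φ (Multiplicative.ofAdd (Pi.single 1 1)) ^ (Multiplicative.toAdd z 1) = φ z
    have hz : z = Multiplicative.ofAdd (Multiplicative.toAdd z 0 • Pi.single (0 : Fin 2) (1 : ℤ)
        + Multiplicative.toAdd z 1 • Pi.single (1 : Fin 2) (1 : ℤ)) := by
      apply congrArg Multiplicative.ofAdd ?_ |>.trans rfl |>.symm.trans rfl |>.symm
      funext i
      fin_cases i <;> simp <;> rfl
    conv_rhs => rw [hz, ofAdd_add, φ.map_mul, ofAdd_zsmul, ofAdd_zsmul, φ.map_zpow, φ.map_zpow]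
  right_inv p := by
    apply Subtype.ext
    apply Prod.ext <;> simp [MonoidHom.mk']

lemma card_zg2_hom : Nat.card (Zg 2 →* A4) = 48 := by
  rw [Nat.card_congr (zg2Equiv A4), Nat.card_eq_fintype_card, Fintype.card_subtype]
  exact dec_commpairs

/-! ### The conjugation action of `S4` on homomorphisms into `A4` -/

/-- Conjugation by an element of `S4` as an automorphism of `A4`. -/
def conjA4 (σ : S4) : A4 ≃* A4 where
  toFun a := ⟨σ * ↑a * σ⁻¹, Subgroup.Normal.conj_mem inferInstance _ a.2 σ⟩
  invFun a := ⟨σ⁻¹ * ↑a * σ, by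
    have := Subgroup.Normal.conj_mem (H := alternatingGroup (Fin 4)) inferInstance _ a.2 σ⁻¹
    simpa using this⟩
  left_inv a := by ext; simp [mul_assoc]
  right_inv a := by ext; simp [mul_assoc]
  map_mul' a b := by ext; simp [mul_assoc]

instance s4HomSMul (Γ : Type*) [Group Γ] : SMul S4 (Γ →* A4) :=
  ⟨fun σ φ => (conjA4 σ).toMonoidHom.comp φ⟩

lemma s4_smul_hom_apply {Γ : Type*} [Group Γ] (σ : S4) (φ : Γ →* A4) (x : Γ) :
    ((σ • φ) x : S4) = σ * (φ x : S4) * σ⁻¹ := rfl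

instance s4HomAction (Γ : Type*) [Group Γ] : MulAction S4 (Γ →* A4) :=
  { s4HomSMul Γ with
    one_smul := fun φ => MonoidHom.ext fun x => Subtype.ext (by
      rw [s4_smul_hom_apply]; simp)
    mul_smul := fun σ τ φ => MonoidHom.ext fun x => Subtype.ext (by
      rw [s4_smul_hom_apply, s4_smul_hom_apply, s4_smul_hom_apply]
      simp [mul_assoc]) }



/-! ### Homomorphisms with non-commutative image -/

/-- The type of homomorphisms with non-abelian image. -/
abbrev NCset (Γ : Type*) [Group Γ] : Type _ := {φ : Γ →* A4 // ¬ ∀ x y, Commute (φ x) (φ y)}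

instance ncSMul (Γ : Type*) [Group Γ] : SMul S4 (NCset Γ) :=
  ⟨fun σ φ => ⟨σ • φ.1, by
    intro hcomm
    apply φ.2
    intro x y
    have h : Commute (conjA4 σ (φ.1 x)) (conjA4 σ (φ.1 y)) := hcomm x y
    have h2 := h.map (conjA4 σ).symm
    simpa using h2⟩⟩

lemma ncSMul_coe {Γ : Type*} [Group Γ] (σ : S4) (φ : NCset Γ) : (σ • φ).1 = σ • φ.1 := rfl

instance ncAction (Γ : Type*) [Group Γ] : MulAction S4 (NCset Γ) :=
  { ncSMul Γ with
    one_smul := fun φ => Subtype.ext (by rw [ncSMul_coe, one_smul])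
    mul_smul := fun σ τ φ => Subtype.ext (by
      rw [ncSMul_coe, ncSMul_coe, ncSMul_coe, mul_smul]) }

lemma nc_stab_bot {Γ : Type*} [Group Γ] (φ : NCset Γ) :
    MulAction.stabilizer S4 φ = ⊥ := by
  rw [eq_bot_iff]
  intro σ hσ
  have hσ' : σ • φ.1 = φ.1 := congrArg Subtype.val (MulAction.mem_stabilizer_iff.mp hσ)
  have h1 : ∀ z, σ * (φ.1 z : S4) = (φ.1 z : S4) * σ := by
    intro z
    have := congrArg (fun (ψ : Γ →* A4) => ((ψ z : A4) : S4)) hσ'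
    rw [s4_smul_hom_apply] at this
    exact mul_inv_eq_iff_eq_mul.mp this
  have hnc := φ.2
  push_neg at hnc
  obtain ⟨x, y, hxy⟩ := hnc
  have hne : ¬ (φ.1 x * φ.1 y = φ.1 y * φ.1 x) := hxy
  have := dec_rigid (φ.1 x) (φ.1 y) σ hne (h1 x) (h1 y)
  simp [this, Subgroup.mem_bot]

lemma card_S4 : Nat.card S4 = 24 := by
  rw [Nat.card_eq_fintype_card]
  decide

lemma dvd_NC (Γ : Type*) [Group Γ] [Finite (Γ →* A4)] : 24 ∣ Nat.card (NCset Γ) := by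
  classical
  haveI : Finite (NCset Γ) := Subtype.finite
  have e0 := MulAction.selfEquivSigmaOrbits S4 (NCset Γ)
  have e1 := Equiv.sigmaCongrRight fun ω : MulAction.orbitRel.Quotient S4 (NCset Γ) =>
        ((MulAction.orbitEquivQuotientStabilizer S4 ω.out).trans
          ((Subgroup.quotientEquivOfEq (nc_stab_bot ω.out)).trans
            (QuotientGroup.quotientBot (G := S4)).toEquiv))
  have e2 := (e0.trans e1).trans (Equiv.sigmaEquivProd _ _)
  refine ⟨Nat.card (MulAction.orbitRel.Quotient S4 (NCset Γ)), ?_⟩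
  rw [Nat.card_congr e2, Nat.card_prod, card_S4, mul_comm]

/-! ### Counting homomorphisms from the two-generator group -/

lemma cardL_eq {ΓL : Type*} [Group ΓL]
    (hgenL : ∃ a b : ΓL, Subgroup.closure {a, b} = (⊤ : Subgroup ΓL))
    (habL : Nonempty (Abelianization ΓL ≃* Zg 2)) :
    (Finite (ΓL →* A4)) ∧ ∃ k : ℕ, k ≤ 4 ∧ Nat.card (ΓL →* A4) = 48 + 24 * k := by
  classical
  obtain ⟨a, b, hab⟩ := hgenL
  haveI hfin : Finite (ΓL →* A4) :=
    finite_hom {a, b} (Set.toFinite _) hab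
  refine ⟨hfin, ?_⟩
  have hsplit : Nat.card (ΓL →* A4) =
      Nat.card {φ : ΓL →* A4 // ∀ x y, Commute (φ x) (φ y)} + Nat.card (NCset ΓL) := by
    rw [← Nat.card_sum, Nat.card_congr (Equiv.sumCompl _)]
  have hcomm48 : Nat.card {φ : ΓL →* A4 // ∀ x y, Commute (φ x) (φ y)} = 48 := by
    obtain ⟨e⟩ := habL
    rw [Nat.card_congr (commRangeEquiv ΓL A4), Nat.card_congr (precompEquiv e.symm),
      card_zg2_hom]
  have hdvd : 24 ∣ Nat.card (NCset ΓL) := dvd_NC ΓL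
  have hle : Nat.card (ΓL →* A4) ≤ 144 := by
    have h1 : Nat.card (ΓL →* A4) ≤ Nat.card (A4 × A4) := by
      apply Nat.card_le_card_of_injective (fun φ : ΓL →* A4 => (φ a, φ b))
      intro φ ψ h
      apply MonoidHom.eq_of_eqOn_dense hab
      intro x hx
      rcases hx with rfl | hx
      · exact congrArg Prod.fst h
      · rw [Set.mem_singleton_iff] at hx
        subst hx
        exact congrArg Prod.snd h
    have h2 : Nat.card (A4 × A4) = 144 := by
      rw [Nat.card_prod, Nat.card_eq_fintype_card, dec_cardA4]
    omega
  obtain ⟨k, hk⟩ := hdvd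
  exact ⟨k, by omega, by omega⟩

/-! ### Counting homomorphisms from a free product -/

lemma coprod_hom_card (ΓL Γ' K : Type*) [Group ΓL] [Group Γ'] [Group K] :
    Nat.card (Monoid.Coprod ΓL Γ' →* K) = Nat.card (ΓL →* K) * Nat.card (Γ' →* K) :=
  ((Nat.card_congr (Monoid.Coprod.liftEquiv
      (M := ΓL) (N := Γ') (P := K)).symm).trans (Nat.card_prod _ _))

/-! ### The main theorem -/

open scoped IsMulCommutative

theorem statement_19 (g : ℕ) (hg : 2 ≤ g)
    (ΓL : Type*) [Group ΓL]
    (hgenL : ∃ a b : ΓL, Subgroup.closure {a, b} = (⊤ : Subgroup ΓL))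
    (habL : Nonempty (Abelianization ΓL ≃* Zg 2))
    (Γ' : Type*) [Group Γ'] (hΓ' : Group.FG Γ')
    (hab' : Nonempty (Abelianization Γ' ≃* Zg (g - 2))) :
    ∃ k : ℕ, k ≤ 4 ∧
      (ks A4 (Monoid.Coprod ΓL Γ') : ℤ) =
        (48 + 24 * k) * (ks A4 Γ' : ℤ)
          - (26 + 16 * k) * 3 ^ (g - 2) - (8 + 6 * k) * 4 ^ (g - 2) ∧
      ((48 + 24 * (k : ℤ))) ∣ (ks A4 (Monoid.Coprod ΓL Γ') : ℤ)
          + (26 + 16 * k) * 3 ^ (g - 2) + (8 + 6 * k) * 4 ^ (g - 2) := by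
  classical
  obtain ⟨hfinL, k, hk4, hkL⟩ := cardL_eq hgenL habL
  haveI := hfinL
  obtain ⟨S', hS'top, hS'fin⟩ := Group.fg_iff.mp hΓ'
  haveI hfin' : Finite (Γ' →* A4) := finite_hom S' hS'fin hS'top
  haveI : Finite (Monoid.Coprod ΓL Γ' →* A4) :=
    Finite.of_equiv _ (Monoid.Coprod.liftEquiv (M := ΓL) (N := Γ') (P := A4))
  set n := g - 2 with hn
  have hY := burnside_A4 Γ' (4 ^ n) (3 ^ n)
    (fun K hc h4 => by
      haveI := hc
      rw [card_hom_abelian n hab' K, h4])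
    (fun K hc h3 => by
      haveI := hc
      rw [card_hom_abelian n hab' K, h3])
  have hX := burnside_A4 (Monoid.Coprod ΓL Γ') (16 * 4 ^ n) (9 * 3 ^ n)
    (fun K hc h4 => by
      haveI := hc
      rw [coprod_hom_card, card_hom_abelian 2 habL K, card_hom_abelian n hab' K, h4]
      ring)
    (fun K hc h3 => by
      haveI := hc
      rw [coprod_hom_card, card_hom_abelian 2 habL K, card_hom_abelian n hab' K, h3]
      ring)
  rw [coprod_hom_card, hkL] at hX
  have hXz : ((ks A4 (Monoid.Coprod ΓL Γ') : ℤ)) * 12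
      = (48 + 24 * (k : ℤ)) * (Nat.card (Γ' →* A4) : ℤ)
          + 3 * (16 * 4 ^ n) + 8 * (9 * 3 ^ n) := by
    exact_mod_cast congrArg (fun m : ℕ => (m : ℤ)) hX
  have hYz : ((ks A4 Γ' : ℤ)) * 12
      = (Nat.card (Γ' →* A4) : ℤ) + 3 * 4 ^ n + 8 * 3 ^ n := by
    exact_mod_cast congrArg (fun m : ℕ => (m : ℤ)) hY
  have hmain : (ks A4 (Monoid.Coprod ΓL Γ') : ℤ) =
      (48 + 24 * k) * (ks A4 Γ' : ℤ) - (26 + 16 * k) * 3 ^ n - (8 + 6 * k) * 4 ^ n := by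
    apply mul_left_cancel₀ (a := (12 : ℤ)) (by norm_num)
    linear_combination hXz - (48 + 24 * (k : ℤ)) * hYz
  exact ⟨k, hk4, hmain, ⟨(ks A4 Γ' : ℤ), by linear_combination hmain⟩⟩
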